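/- For every fixed s ∈ [0,∞)^m, the function t ↦ D_φ(s∣t) from [0,∞)^m to ℝ ∪ {∞} is continuous on [0,∞)^m (with the order topology on ℝ ∪ {∞}). -/

import Mathlib

open Filter Topology

/-- The extended-real-valued integrand `f(v,w)` of a `φ`-divergence:
`f(v,w) = w·φ(v/w)` if `w > 0`, `f(v,0) = v·L` if `v > 0`, and `f(0,0) = 0`,
where `L = lim_{x→∞} φ(x)/x ∈ ℝ ∪ {∞}`. -/
noncomputable def phiF (φ : ℝ → ℝ) (L : EReal) (v w : ℝ) : EReal :=
  if 0 < w then ((w * φ (v / w) : ℝ) : EReal)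
  else if 0 < v then (v : EReal) * L
  else 0

/-- The `φ`-divergence `D_φ(s∣t) = Σ_{i=1}^m f(s_i, t_i)` of `s` relative to `t`. -/
noncomputable def Dphi (φ : ℝ → ℝ) (L : EReal) {m : ℕ} (s t : Fin m → ℝ) : EReal :=
  ∑ i, phiF φ L (s i) (t i)

/-- for fixed `s ∈ [0,∞)^m`, the map `t ↦ D_φ(s∣t)` is continuous
on `[0,∞)^m`. -/
lemma L_ne_bot (φ : ℝ → ℝ) (L : EReal) (hφconv : ConvexOn ℝ (Set.Ici 0) φ)
    (hL : Tendsto (fun x : ℝ => ((φ x / x : ℝ) : EReal)) atTop (𝓝 L)) : L ≠ ⊥ := by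
  set c := φ 2 - φ 1 with hc
  set d := φ 2 - 2 * c with hd
  have hb : ∀ z : ℝ, 3 ≤ z → c - |d| ≤ φ z / z := by
    intro z hz
    have h2z : (2:ℝ) < z := by linarith
    have hslope := hφconv.slope_mono_adjacent (x := 1) (y := 2) (z := z)
      (by norm_num) (Set.mem_Ici.mpr (by linarith)) (by norm_num) h2z
    have h1 : c ≤ (φ z - φ 2) / (z - 2) := by
      have : (φ 2 - φ 1) / (2 - 1) = c := by norm_num [hc]
      linarith [hslope, this ▸ hslope]
    have h2 : c * (z - 2) ≤ φ z - φ 2 := by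
      have := (le_div_iff₀ (by linarith : (0:ℝ) < z - 2)).mp h1
      linarith
    rw [le_div_iff₀ (by linarith : (0:ℝ) < z)]
    nlinarith [neg_abs_le d, abs_nonneg d]
  have hle : ((c - |d| : ℝ) : EReal) ≤ L := by
    refine ge_of_tendsto hL (eventually_atTop.mpr ⟨3, fun z hz => ?_⟩)
    exact EReal.coe_le_coe_iff.mpr (hb z hz)
  intro h
  rw [h, le_bot_iff] at hle
  exact EReal.coe_ne_bot _ hle

lemma phiF_contOn (φ : ℝ → ℝ) (L : EReal) (hφconv : ConvexOn ℝ (Set.Ici 0) φ)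
    (hL : Tendsto (fun x : ℝ => ((φ x / x : ℝ) : EReal)) atTop (𝓝 L))
    (v : ℝ) (hv : 0 ≤ v) : ContinuousOn (fun w => phiF φ L v w) (Set.Ici 0) := by
  have hφcont : ContinuousOn φ (Set.Ioi 0) := by
    have := hφconv.continuousOn_interior
    rwa [interior_Ici] at this
  rcases eq_or_lt_of_le hv with hv0 | hv0
  · -- v = 0
    subst hv0
    refine (ContinuousOn.congr (f := fun w : ℝ => ((w * φ 0 : ℝ) : EReal)) ?_ ?_)
    · exact (continuous_coe_real_ereal.comp (by continuity)).continuousOn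
    · intro w hw
      rcases eq_or_lt_of_le (Set.mem_Ici.mp hw) with h | h
      · simp [phiF, ← h]
      · simp [phiF, h, zero_div]
  · -- v > 0
    intro w hw
    rcases eq_or_lt_of_le (Set.mem_Ici.mp hw) with h0 | h0
    · -- w = 0
      subst h0
      have hval : phiF φ L v 0 = (v : EReal) * L := by simp [phiF, hv0]
      have hIci : Set.Ici (0:ℝ) = {0} ∪ Set.Ioi 0 := by
        ext x; simp [le_iff_lt_or_eq, eq_comm, or_comm]
      have hpure : Tendsto (fun w => phiF φ L v w) (𝓝[{(0:ℝ)}] 0) (𝓝 ((v:EReal) * L)) := by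
        rw [nhdsWithin_singleton, ← hval]
        exact tendsto_pure_nhds _ _
      have hIoi : Tendsto (fun w => phiF φ L v w) (𝓝[Set.Ioi (0:ℝ)] 0) (𝓝 ((v:EReal) * L)) := by
        have h1 : Tendsto (fun w : ℝ => v / w) (𝓝[Set.Ioi (0:ℝ)] 0) atTop := by
          have := tendsto_inv_nhdsGT_zero.const_mul_atTop hv0
          simpa [div_eq_mul_inv] using this
        have h2 : Tendsto (fun w : ℝ => ((φ (v / w) / (v / w) : ℝ) : EReal))
            (𝓝[Set.Ioi (0:ℝ)] 0) (𝓝 L) := hL.comp h1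
        have hmul : ContinuousAt (fun p : EReal × EReal => p.1 * p.2) ((v : EReal), L) :=
          EReal.continuousAt_mul (Or.inl (show ((v:ℝ):EReal) ≠ 0 by exact_mod_cast hv0.ne'))
            (Or.inl (show ((v:ℝ):EReal) ≠ 0 by exact_mod_cast hv0.ne')) (Or.inl (EReal.coe_ne_bot v))
            (Or.inl (EReal.coe_ne_top v))
        have h3 : Tendsto (fun w : ℝ => (v : EReal) * ((φ (v / w) / (v / w) : ℝ) : EReal))
            (𝓝[Set.Ioi (0:ℝ)] 0) (𝓝 ((v : EReal) * L)) :=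
          hmul.tendsto.comp (tendsto_const_nhds.prodMk_nhds h2)
        refine h3.congr' ?_
        refine eventually_nhdsWithin_of_forall (fun w hw => ?_)
        have hw0 : (0:ℝ) < w := hw
        have hx0 : (0:ℝ) < v / w := div_pos hv0 hw0
        have : v * (φ (v / w) / (v / w)) = w * φ (v / w) := by
          field_simp
        show ((v:ℝ):EReal) * ((φ (v / w) / (v / w) : ℝ) : EReal) = phiF φ L v w
        rw [← EReal.coe_mul, this]
        simp [phiF, hw0]
      rw [ContinuousWithinAt, hval, hIci, nhdsWithin_union]
      exact Tendsto.sup hpure hIoi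
    · -- w > 0
      have hreal : ContinuousAt (fun w : ℝ => w * φ (v / w)) w := by
        have hdiv : ContinuousAt (fun w : ℝ => v / w) w :=
          (continuousAt_const.div continuousAt_id h0.ne')
        have hφat : ContinuousAt φ (v / w) :=
          hφcont.continuousAt (Ioi_mem_nhds (div_pos hv0 h0))
        exact continuousAt_id.mul (hφat.comp hdiv)
      have hca : ContinuousAt (fun w : ℝ => ((w * φ (v / w) : ℝ) : EReal)) w :=
        continuous_coe_real_ereal.continuousAt.comp hreal
      refine ContinuousAt.continuousWithinAt (hca.congr ?_)
      filter_upwards [Ioi_mem_nhds h0] with x hx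
      have hx0 : (0:ℝ) < x := hx
      simp only [phiF, if_pos hx0]

lemma phiF_ne_bot (φ : ℝ → ℝ) (L : EReal) (hL' : L ≠ ⊥) (v w : ℝ) :
    phiF φ L v w ≠ ⊥ := by
  unfold phiF
  split_ifs with h1 h2
  · exact EReal.coe_ne_bot _
  · induction L with
    | bot => exact absurd rfl hL'
    | coe r => rw [← EReal.coe_mul]; exact EReal.coe_ne_bot _
    | top => rw [EReal.coe_mul_top_of_pos h2]; exact bot_lt_top.ne'
  · exact fun h => by simp at h

lemma sum_cwa {α : Type*} [TopologicalSpace α] {S : Set α} {x : α} {ι : Type*}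
    (u : Finset ι) (F : ι → α → EReal)
    (hF : ∀ i ∈ u, ContinuousWithinAt (F i) S x)
    (hb : ∀ i ∈ u, F i x ≠ ⊥) :
    ContinuousWithinAt (fun y => ∑ i ∈ u, F i y) S x ∧ (∑ i ∈ u, F i x) ≠ ⊥ := by
  classical
  induction u using Finset.induction_on with
  | empty => simpa using continuousWithinAt_const
  | @insert a u ha ih =>
    obtain ⟨ihc, ihb⟩ := ih (fun i hi => hF i (Finset.mem_insert_of_mem hi))
      (fun i hi => hb i (Finset.mem_insert_of_mem hi))
    have hba : F a x ≠ ⊥ := hb a (Finset.mem_insert_self a u)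
    have hadd : ContinuousAt (fun p : EReal × EReal => p.1 + p.2)
        (F a x, ∑ i ∈ u, F i x) :=
      EReal.continuousAt_add (Or.inr ihb) (Or.inl hba)
    constructor
    · have : ContinuousWithinAt (fun y => F a y + ∑ i ∈ u, F i y) S x :=
        hadd.tendsto.comp ((hF a (Finset.mem_insert_self a u)).prodMk_nhds ihc)
      refine this.congr (fun y _ => ?_) ?_ <;> rw [Finset.sum_insert ha]
    · rw [Finset.sum_insert ha]
      intro h
      rcases EReal.add_eq_bot_iff.mp h with h | h
      · exact hba h
      · exact ihb h

theorem statement1 (m : ℕ) (hm : 1 ≤ m) (φ : ℝ → ℝ) (L : EReal)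
    (hφconv : ConvexOn ℝ (Set.Ici 0) φ)
    (hφ0 : ContinuousWithinAt φ (Set.Ici 0) 0)
    (hL : Tendsto (fun x : ℝ => ((φ x / x : ℝ) : EReal)) atTop (𝓝 L))
    (s : Fin m → ℝ) (hs : ∀ i, 0 ≤ s i) :
    ContinuousOn (fun t : Fin m → ℝ => Dphi φ L s t)
      {t : Fin m → ℝ | ∀ i, 0 ≤ t i} := by
  have hL' : L ≠ ⊥ := L_ne_bot φ L hφconv hL
  intro t ht
  have key := sum_cwa (S := {t : Fin m → ℝ | ∀ i, 0 ≤ t i}) (x := t) Finset.univ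
    (fun i y => phiF φ L (s i) (y i))
    (fun i _ =>
      ContinuousWithinAt.comp (f := fun y : Fin m → ℝ => y i)
        (g := fun w => phiF φ L (s i) w)
        ((phiF_contOn φ L hφconv hL (s i) (hs i)) (t i) (ht i))
        ((continuous_apply i).continuousWithinAt) (fun y hy => hy i))
    (fun i _ => phiF_ne_bot φ L hL' _ _)
  simpa only [Dphi] using key.1
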